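/- Let τ ∈ [0,1) and y > 0. Then (1/(2y)) ∫₀^∞ δ · √(δ² + 4y²) · exp(−δ²/(2(1−τ²))) dδ = (1−τ²) + √(π/2) · (1−τ²)^{3/2} · exp(2y²/(1−τ²)) · (1/(2y)) · erfc(√(2/(1−τ²)) · y), where the integral is with respect to Lebesgue measure on (0,∞). -/

import Mathlib

open MeasureTheory

/-- The complementary error function `erfc(x) = (2/√π) ∫_x^∞ e^{−t²} dt`. -/
noncomputable def erfc (x : ℝ) : ℝ :=
  2 / Real.sqrt Real.pi * ∫ t in Set.Ioi x, Real.exp (-t ^ 2)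

namespace DeltaErfcAux

open Set Filter

noncomputable def E (x : ℝ) : ℝ := ∫ t in Set.Ioi x, Real.exp (-t ^ 2)

lemma gauss_integrable : Integrable (fun t : ℝ => Real.exp (-t ^ 2)) := by
  simpa using integrable_exp_neg_mul_sq (one_pos)

lemma E_eq (x : ℝ) : E x = E 0 - ∫ t in (0:ℝ)..x, Real.exp (-t ^ 2) := by
  have hsplit : ∀ z : ℝ,
      (∫ t in Iic z, Real.exp (-t ^ 2)) + E z = ∫ t : ℝ, Real.exp (-t ^ 2) := by
    intro z
    exact intervalIntegral.integral_Iic_add_Ioi gauss_integrable.integrableOn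
      gauss_integrable.integrableOn
  have h := intervalIntegral.integral_Iic_sub_Iic
    (gauss_integrable.integrableOn (s := Iic (0:ℝ)))
    (gauss_integrable.integrableOn (s := Iic x))
  have h0 := hsplit 0
  have hx := hsplit x
  linarith [h, h0, hx]

lemma E_hasDerivAt (x : ℝ) : HasDerivAt E (-(Real.exp (-x ^ 2))) x := by
  have hF : HasDerivAt (fun u => ∫ t in (0:ℝ)..u, Real.exp (-t ^ 2))
      (Real.exp (-x ^ 2)) x := by
    refine intervalIntegral.integral_hasDerivAt_right
      (gauss_integrable.intervalIntegrable) ?_ ?_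
    · exact (Real.continuous_exp.comp (by continuity)).stronglyMeasurable.stronglyMeasurableAtFilter
    · exact (Real.continuous_exp.comp (by continuity)).continuousAt
  have : HasDerivAt (fun u => E 0 - ∫ t in (0:ℝ)..u, Real.exp (-t ^ 2))
      (-(Real.exp (-x ^ 2))) x := by
    exact ((hasDerivAt_const x (E 0)).sub hF).congr_deriv (by ring)
  exact this.congr_of_eventuallyEq (Filter.Eventually.of_forall fun u => E_eq u)

lemma E_tendsto : Tendsto E atTop (nhds 0) := by
  have h : Tendsto (fun x => ∫ t in (0:ℝ)..x, Real.exp (-t ^ 2)) atTop (nhds (E 0)) :=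
    intervalIntegral_tendsto_integral_Ioi 0 gauss_integrable.integrableOn tendsto_id
  have : Tendsto (fun x => E 0 - ∫ t in (0:ℝ)..x, Real.exp (-t ^ 2)) atTop
      (nhds (E 0 - E 0)) := (tendsto_const_nhds).sub h
  simpa using this.congr fun u => (E_eq u).symm

/-- The key improper integral computation. -/
lemma key (s y : ℝ) (hs : 0 < s) (hy : 0 < y) :
    ∫ δ in Set.Ioi (0:ℝ),
        δ * Real.sqrt (δ ^ 2 + 4 * y ^ 2) * Real.exp (-δ ^ 2 / (2 * s)) =
      2 * s * y + s * Real.exp (2 * y ^ 2 / s) * Real.sqrt (2 * s) *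
        E (2 * y / Real.sqrt (2 * s)) := by
  set c : ℝ := s * Real.exp (2 * y ^ 2 / s) * Real.sqrt (2 * s) with hc
  set H : ℝ → ℝ := fun δ =>
    -s * Real.sqrt (δ ^ 2 + 4 * y ^ 2) * Real.exp (-δ ^ 2 / (2 * s)) -
      c * E (Real.sqrt (δ ^ 2 + 4 * y ^ 2) / Real.sqrt (2 * s)) with hH
  have h2s : (0:ℝ) < 2 * s := by linarith
  have hsq2s : Real.sqrt (2 * s) > 0 := Real.sqrt_pos.mpr h2s
  have hwpos : ∀ δ : ℝ, 0 < δ ^ 2 + 4 * y ^ 2 := fun δ => by positivity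
  have hw_deriv : ∀ δ : ℝ, HasDerivAt (fun δ => Real.sqrt (δ ^ 2 + 4 * y ^ 2))
      (δ / Real.sqrt (δ ^ 2 + 4 * y ^ 2)) δ := by
    intro δ
    have hinner : HasDerivAt (fun δ : ℝ => δ ^ 2 + 4 * y ^ 2) (2 * δ) δ := by
      simpa using ((hasDerivAt_pow 2 δ).add_const (4 * y ^ 2))
    have := (Real.hasDerivAt_sqrt (ne_of_gt (hwpos δ))).comp δ hinner
    refine this.congr_deriv ?_
    field_simp
  have hexp_deriv : ∀ δ : ℝ, HasDerivAt (fun δ : ℝ => Real.exp (-δ ^ 2 / (2 * s)))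
      (-δ / s * Real.exp (-δ ^ 2 / (2 * s))) δ := by
    intro δ
    have hinner : HasDerivAt (fun δ : ℝ => -δ ^ 2 / (2 * s)) (-δ / s) δ := by
      have : HasDerivAt (fun δ : ℝ => -δ ^ 2) (-(2 * δ)) δ := by
        exact ((hasDerivAt_pow 2 δ).neg).congr_deriv (by norm_num)
      refine (this.div_const (2 * s)).congr_deriv ?_
      field_simp
    simpa [mul_comm] using hinner.exp
  have hH_deriv : ∀ δ : ℝ, HasDerivAt H
      (δ * Real.sqrt (δ ^ 2 + 4 * y ^ 2) * Real.exp (-δ ^ 2 / (2 * s))) δ := by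
    intro δ
    set w : ℝ := Real.sqrt (δ ^ 2 + 4 * y ^ 2) with hwdef
    have hw0 : 0 < w := Real.sqrt_pos.mpr (hwpos δ)
    have hw2 : w ^ 2 = δ ^ 2 + 4 * y ^ 2 := Real.sq_sqrt (hwpos δ).le
    have h1 : HasDerivAt (fun δ => -s * Real.sqrt (δ ^ 2 + 4 * y ^ 2) *
        Real.exp (-δ ^ 2 / (2 * s)))
        ((-s * (δ / w)) * Real.exp (-δ ^ 2 / (2 * s)) +
          (-s * w) * (-δ / s * Real.exp (-δ ^ 2 / (2 * s)))) δ :=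
      ((hw_deriv δ).const_mul (-s)).mul (hexp_deriv δ)
    have h2 : HasDerivAt (fun δ => c * E (Real.sqrt (δ ^ 2 + 4 * y ^ 2) / Real.sqrt (2 * s)))
        (c * (-(Real.exp (-(w / Real.sqrt (2 * s)) ^ 2)) *
          (δ / w / Real.sqrt (2 * s)))) δ := by
      have hinner : HasDerivAt (fun δ => Real.sqrt (δ ^ 2 + 4 * y ^ 2) / Real.sqrt (2 * s))
          (δ / w / Real.sqrt (2 * s)) δ := (hw_deriv δ).div_const _
      have := ((E_hasDerivAt (w / Real.sqrt (2 * s))).comp δ hinner).const_mul c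
      exact this
    have := h1.sub h2
    refine this.congr_deriv ?_
    have hexpand : Real.exp (-(w / Real.sqrt (2 * s)) ^ 2) =
        Real.exp (-δ ^ 2 / (2 * s)) * Real.exp (-(2 * y ^ 2 / s)) := by
      rw [← Real.exp_add]
      congr 1
      rw [div_pow, hw2, Real.sq_sqrt h2s.le]
      field_simp
      ring
    rw [hexpand]
    set e1 : ℝ := Real.exp (-δ ^ 2 / (2 * s)) with he1
    have hcE : c * Real.exp (-(2 * y ^ 2 / s)) = s * Real.sqrt (2 * s) := by
      rw [hc]
      rw [show s * Real.exp (2 * y ^ 2 / s) * Real.sqrt (2 * s) *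
          Real.exp (-(2 * y ^ 2 / s)) =
          s * Real.sqrt (2 * s) * (Real.exp (2 * y ^ 2 / s) *
            Real.exp (-(2 * y ^ 2 / s))) by ring, ← Real.exp_add]
      simp
    have hkey : c * (-(e1 * Real.exp (-(2 * y ^ 2 / s))) * (δ / w / Real.sqrt (2 * s))) =
        -(s * e1 * δ / w) := by
      rw [show c * (-(e1 * Real.exp (-(2 * y ^ 2 / s))) * (δ / w / Real.sqrt (2 * s))) =
          (c * Real.exp (-(2 * y ^ 2 / s))) * (-e1 * (δ / w / Real.sqrt (2 * s))) by ring,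
        hcE]
      field_simp
    rw [hkey]
    field_simp
    ring
  -- integrability of the integrand
  have hb : (0:ℝ) < 1/(2*s) := by positivity
  have hw_le : ∀ δ : ℝ, 0 ≤ δ → Real.sqrt (δ^2 + 4*y^2) ≤ δ + 2*y := by
    intro δ hδ
    calc Real.sqrt (δ^2 + 4*y^2) ≤ Real.sqrt ((δ + 2*y)^2) :=
          Real.sqrt_le_sqrt (by nlinarith)
      _ = δ + 2*y := Real.sqrt_sq (by positivity)
  have hrpow2 : ∀ x : ℝ, x ^ (2:ℝ) = x ^ 2 := by
    intro x
    rw [show (2:ℝ) = ((2:ℕ):ℝ) by norm_num, Real.rpow_natCast]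
  have hexp_eq : ∀ x : ℝ, Real.exp (-(1/(2*s)) * x ^ 2) = Real.exp (-x^2/(2*s)) := by
    intro x; congr 1; field_simp
  have hint : IntegrableOn (fun δ : ℝ =>
      δ * Real.sqrt (δ ^ 2 + 4 * y ^ 2) * Real.exp (-δ ^ 2 / (2 * s))) (Ioi 0) := by
    have h2' : IntegrableOn (fun x : ℝ => x ^ (2:ℝ) * Real.exp (-(1/(2*s)) * x ^ 2)) (Ioi 0) :=
      integrableOn_rpow_mul_exp_neg_mul_sq hb (by norm_num)
    have h1' : IntegrableOn (fun x : ℝ => x ^ (1:ℝ) * Real.exp (-(1/(2*s)) * x ^ 2)) (Ioi 0) :=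
      integrableOn_rpow_mul_exp_neg_mul_sq hb (by norm_num)
    have hg : IntegrableOn (fun x : ℝ =>
        x ^ (2:ℝ) * Real.exp (-(1/(2*s)) * x ^ 2) +
          (2*y) * (x ^ (1:ℝ) * Real.exp (-(1/(2*s)) * x ^ 2))) (Ioi 0) :=
      h2'.add (h1'.const_mul (2*y))
    refine Integrable.mono' hg ?_ ?_
    · refine (Continuous.aestronglyMeasurable ?_).restrict
      fun_prop
    · rw [ae_restrict_iff' measurableSet_Ioi]
      refine Filter.Eventually.of_forall fun x hx => ?_
      have hx0 : (0:ℝ) ≤ x := (le_of_lt hx)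
      have hwle := hw_le x hx0
      have he : (0:ℝ) < Real.exp (-x^2/(2*s)) := Real.exp_pos _
      have hwnn : 0 ≤ Real.sqrt (x^2 + 4*y^2) := Real.sqrt_nonneg _
      rw [Real.norm_eq_abs, abs_of_nonneg (by positivity), hrpow2, Real.rpow_one,
        hexp_eq]
      nlinarith [mul_le_mul_of_nonneg_left (mul_le_mul_of_nonneg_right hwle he.le) hx0,
        mul_nonneg hx0 hwnn]
  -- tendsto of H at infinity
  have hE2 : Filter.Tendsto (fun δ : ℝ => Real.exp (-δ^2/(2*s))) atTop (nhds 0) := by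
    have h1 : Filter.Tendsto (fun δ : ℝ => δ^2 / (2*s)) atTop atTop :=
      (tendsto_pow_atTop (two_ne_zero)).atTop_div_const h2s
    have h2 : Filter.Tendsto (fun δ : ℝ => -δ^2/(2*s)) atTop atBot := by
      have := tendsto_neg_atTop_atBot.comp h1
      refine this.congr fun x => ?_
      simp [neg_div]
    exact Real.tendsto_exp_atBot.comp h2
  have hexp_half : Filter.Tendsto (fun x : ℝ => Real.exp (-(1/2) * x)) atTop (nhds 0) := by
    have h2 : Filter.Tendsto (fun x : ℝ => -(1/2) * x) atTop atBot := by
      have h1 : Filter.Tendsto (fun x : ℝ => (1/2 : ℝ) * x) atTop atTop :=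
        Filter.Tendsto.const_mul_atTop one_half_pos tendsto_id
      have := tendsto_neg_atTop_atBot.comp h1
      refine this.congr fun x => ?_
      simp
    exact Real.tendsto_exp_atBot.comp h2
  have hdE : Filter.Tendsto (fun δ : ℝ => δ * Real.exp (-δ^2/(2*s))) atTop (nhds 0) := by
    have hlo := rpow_mul_exp_neg_mul_sq_isLittleO_exp_neg hb (1:ℝ)
    have := hlo.isBigO.trans_tendsto hexp_half
    refine this.congr fun x => ?_
    rw [Real.rpow_one, hexp_eq]
  have hT1 : Filter.Tendsto (fun δ : ℝ =>
      -s * Real.sqrt (δ ^ 2 + 4 * y ^ 2) * Real.exp (-δ ^ 2 / (2 * s))) atTop (nhds 0) := by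
    have hg0 : Filter.Tendsto (fun δ : ℝ =>
        s * (δ * Real.exp (-δ^2/(2*s))) + s * (2*y) * Real.exp (-δ^2/(2*s))) atTop
        (nhds (s * 0 + s * (2*y) * 0)) :=
      (hdE.const_mul s).add (hE2.const_mul (s * (2*y)))
    rw [show s * 0 + s * (2*y) * 0 = 0 by ring] at hg0
    refine squeeze_zero_norm' ?_ hg0
    filter_upwards [Filter.eventually_ge_atTop (0:ℝ)] with δ hδ
    have he : (0:ℝ) < Real.exp (-δ^2/(2*s)) := Real.exp_pos _
    have hwle := hw_le δ hδ
    have hwnn : 0 ≤ Real.sqrt (δ^2 + 4*y^2) := Real.sqrt_nonneg _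
    have hwe : (0:ℝ) ≤ Real.sqrt (δ^2 + 4*y^2) * Real.exp (-δ^2/(2*s)) :=
      mul_nonneg hwnn he.le
    rw [Real.norm_eq_abs, abs_of_nonpos (by nlinarith), neg_mul, neg_mul, neg_neg]
    nlinarith [mul_le_mul_of_nonneg_left (mul_le_mul_of_nonneg_right hwle he.le) hs.le]
  have hT2 : Filter.Tendsto (fun δ : ℝ =>
      c * E (Real.sqrt (δ ^ 2 + 4 * y ^ 2) / Real.sqrt (2 * s))) atTop (nhds 0) := by
    have hinner : Filter.Tendsto (fun δ : ℝ =>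
        Real.sqrt (δ ^ 2 + 4 * y ^ 2) / Real.sqrt (2 * s)) atTop atTop := by
      refine tendsto_atTop_mono ?_ (tendsto_id.atTop_div_const hsq2s)
      intro δ
      gcongr
      calc (δ : ℝ) ≤ |δ| := le_abs_self δ
        _ = Real.sqrt (δ^2) := (Real.sqrt_sq_eq_abs δ).symm
        _ ≤ Real.sqrt (δ^2 + 4*y^2) := Real.sqrt_le_sqrt (by nlinarith)
    have := (E_tendsto.comp hinner).const_mul c
    simpa using this
  have hHtend : Filter.Tendsto H atTop (nhds 0) := by
    have h := hT1.sub hT2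
    rw [show (0:ℝ) - 0 = 0 by ring] at h
    rw [hH]
    exact h
  have hHcont : ContinuousWithinAt H (Ici 0) 0 :=
    (hH_deriv 0).continuousAt.continuousWithinAt
  have hFTC := integral_Ioi_of_hasDerivAt_of_tendsto hHcont
    (fun x _ => hH_deriv x) hint hHtend
  rw [hFTC]
  have h4y : Real.sqrt ((0:ℝ)^2 + 4*y^2) = 2*y := by
    rw [show (0:ℝ)^2 + 4*y^2 = (2*y)^2 by ring, Real.sqrt_sq (by positivity)]
  simp only [hH, h4y]
  norm_num
  ring

end DeltaErfcAux

theorem delta_integral_erfc (τ : ℝ) (hτ : τ ∈ Set.Ico (0 : ℝ) 1)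
    (y : ℝ) (hy : 0 < y) :
    (1 / (2 * y)) *
        ∫ δ in Set.Ioi (0 : ℝ),
          δ * Real.sqrt (δ ^ 2 + 4 * y ^ 2) * Real.exp (-δ ^ 2 / (2 * (1 - τ ^ 2))) =
      (1 - τ ^ 2) +
        Real.sqrt (Real.pi / 2) * (1 - τ ^ 2) ^ ((3 : ℝ) / 2) *
          Real.exp (2 * y ^ 2 / (1 - τ ^ 2)) * (1 / (2 * y)) *
          erfc (Real.sqrt (2 / (1 - τ ^ 2)) * y) := by
  obtain ⟨hτ0, hτ1⟩ := hτ
  set s : ℝ := 1 - τ ^ 2 with hsdef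
  have hs : 0 < s := by nlinarith
  have h2s : (0:ℝ) < 2 * s := by linarith
  have hsq2 : (0:ℝ) < Real.sqrt 2 := Real.sqrt_pos.mpr (by norm_num)
  have hsqs : (0:ℝ) < Real.sqrt s := Real.sqrt_pos.mpr hs
  have hsqpi : (0:ℝ) < Real.sqrt Real.pi := Real.sqrt_pos.mpr Real.pi_pos
  have h22 : Real.sqrt 2 * Real.sqrt 2 = 2 := Real.mul_self_sqrt (by norm_num)
  have hs2 : Real.sqrt (2*s) = Real.sqrt 2 * Real.sqrt s := Real.sqrt_mul (by norm_num) s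
  have hsdiv : Real.sqrt (2/s) = Real.sqrt 2 / Real.sqrt s := Real.sqrt_div' 2 ?_
  rotate_left
  · exact hs.le
  have harg : 2 * y / Real.sqrt (2*s) = Real.sqrt (2/s) * y := by
    rw [hs2, hsdiv]
    field_simp
    linear_combination (-1 : ℝ) * h22
  have h32 : s ^ ((3:ℝ)/2) = s * Real.sqrt s := by
    rw [Real.sqrt_eq_rpow, show (3:ℝ)/2 = 1 + 1/2 by norm_num, Real.rpow_add hs,
      Real.rpow_one]
  have hpidiv : Real.sqrt (Real.pi/2) = Real.sqrt Real.pi / Real.sqrt 2 :=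
    Real.sqrt_div' Real.pi ?_
  rotate_left
  · norm_num
  have herfc : erfc (Real.sqrt (2/s) * y) =
      2 / Real.sqrt Real.pi * DeltaErfcAux.E (Real.sqrt (2/s) * y) := rfl
  rw [DeltaErfcAux.key s y hs hy, herfc, ← harg, h32, hpidiv]
  have hX : DeltaErfcAux.E (2 * y / Real.sqrt (2*s)) = DeltaErfcAux.E (2 * y / Real.sqrt (2*s)) := rfl
  set X : ℝ := DeltaErfcAux.E (2 * y / Real.sqrt (2*s)) with hXdef
  set P : ℝ := Real.exp (2 * y ^ 2 / s) with hPdef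
  rw [hs2]
  field_simp
  linear_combination (P * Real.sqrt s * X) * h22
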